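/- arXiv:1501.02606 — 2 statements merged into one kernel-verified Lean document; each statement's English description precedes it below -/
import Mathlib

section
/- Let x = (x_n)_{n≥2} and y = (y_n)_{n≥2} be sequences with x_n, y_n ∈ {1,…,n}, let n₀ ≥ 2, let R satisfy e² + ∑_{i=2}^{n₀} e^{i²} + e^{n₀} < R < e² + ∑_{i=2}^{n₀+1} e^{i²}, and let 0 < r < 1 be such that e^n + r < e^{(n+1)²} for 2 ≤ n ≤ n₀. If there is an admissible pseudometric d' on M_x ⊔ M_y with d'(P⁺_{x,2}, P⁺_{y,2}) < r and H_{d',R}(M_x, P⁺_{x,2}; M_y, P⁺_{y,2}) < r, then x_n = y_n for all 2 ≤ n ≤ n₀. -/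
noncomputable section

/-- The plane `ℝ²`, to be equipped with the tree metric. -/
structure TreePlane : Type where
  u : ℝ
  v : ℝ

namespace TreePlane

/-- The tree distance on `ℝ²`. -/
def tdist (p q : TreePlane) : ℝ :=
  if p.u = q.u then |p.v - q.v| else |p.v| + |p.u - q.u| + |q.v|

theorem tdist_self (p : TreePlane) : tdist p p = 0 := by simp [tdist]

theorem tdist_comm (p q : TreePlane) : tdist p q = tdist q p := by
  unfold tdist
  rcases eq_or_ne p.u q.u with h | h
  · simp [h, abs_sub_comm]
  · simp [h, h.symm, abs_sub_comm]
    ring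

theorem tdist_triangle (p q r : TreePlane) : tdist p r ≤ tdist p q + tdist q r := by
  unfold tdist
  rcases eq_or_ne p.u q.u with e1 | e1 <;> rcases eq_or_ne q.u r.u with e2 | e2 <;>
      rcases eq_or_ne p.u r.u with e3 | e3
  · rw [if_pos e1, if_pos e2, if_pos e3]
    exact abs_sub_le _ _ _
  · exact absurd (e1.trans e2) e3
  · exact absurd (e1.symm.trans e3) e2
  · rw [if_pos e1, if_neg e2, if_neg e3, e1]
    have h1 : |p.v| ≤ |p.v - q.v| + |q.v| := by
      calc |p.v| = |p.v - q.v + q.v| := by ring_nf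
        _ ≤ |p.v - q.v| + |q.v| := abs_add_le _ _
    linarith
  · exact absurd (e3.trans e2.symm) e1
  · rw [if_neg e1, if_pos e2, if_neg e3, e2]
    have h1 : |r.v| ≤ |q.v - r.v| + |q.v| := by
      calc |r.v| = |r.v - q.v + q.v| := by ring_nf
        _ ≤ |r.v - q.v| + |q.v| := abs_add_le _ _
        _ = |q.v - r.v| + |q.v| := by rw [abs_sub_comm]
    linarith
  · rw [if_neg e1, if_neg e2, if_pos e3]
    have h1 : |p.v - r.v| ≤ |p.v| + |r.v| := abs_sub _ _
    have h2 := abs_nonneg (p.u - q.u)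
    have h3 := abs_nonneg (q.u - r.u)
    have h4 := abs_nonneg q.v
    linarith
  · rw [if_neg e1, if_neg e2, if_neg e3]
    have h1 : |p.u - r.u| ≤ |p.u - q.u| + |q.u - r.u| := abs_sub_le _ _ _
    have h2 := abs_nonneg q.v
    linarith

theorem tdist_eq_zero {p q : TreePlane} (h : tdist p q = 0) : p = q := by
  unfold tdist at h
  rcases eq_or_ne p.u q.u with e | e
  · rw [if_pos e] at h
    have hv : p.v = q.v := by
      have := abs_eq_zero.mp h
      linarith
    cases p; cases q; simp_all
  · rw [if_neg e] at h
    exfalso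
    have h1 := abs_nonneg p.v
    have h2 := abs_nonneg q.v
    have h3 : 0 < |p.u - q.u| := abs_pos.mpr (sub_ne_zero.mpr e)
    linarith

noncomputable instance : MetricSpace TreePlane where
  dist := tdist
  dist_self := tdist_self
  dist_comm := tdist_comm
  dist_triangle := tdist_triangle
  eq_of_dist_eq_zero := tdist_eq_zero

theorem dist_def (p q : TreePlane) : dist p q = tdist p q := rfl

end TreePlane

open TreePlane

/-- `∑_{i=2}^n e^{i²}`. -/
def expSum (n : ℕ) : ℝ := ∑ i ∈ Finset.Icc 2 n, Real.exp ((i : ℝ) ^ 2)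

/-- `P⁺_{x,n} = (∑_{i=2}^n e^{i²}, e^{x_n})`. -/
def Pp (x : ℕ → ℕ) (n : ℕ) : TreePlane := ⟨expSum n, Real.exp (x n)⟩

/-- `P⁻_{x,n} = (∑_{i=2}^n e^{i²}, −e^{x_n})`. -/
def Pm (x : ℕ → ℕ) (n : ℕ) : TreePlane := ⟨expSum n, -Real.exp (x n)⟩

/-- `M_x = ⋃_{n≥2} {P⁺_{x,n}, P⁻_{x,n}}`, as a subspace of `(ℝ², treeDist)`. -/
def Mset (x : ℕ → ℕ) : Set TreePlane :=
  ⋃ n ∈ {m : ℕ | 2 ≤ m}, ({Pp x n, Pm x n} : Set TreePlane)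

theorem Pp_mem (x : ℕ → ℕ) : Pp x 2 ∈ Mset x :=
  Set.mem_iUnion₂.mpr ⟨2, Set.mem_setOf.mpr (le_refl 2), Or.inl rfl⟩

/-- `x = (x_n)_{n≥2}` is a sequence with `x_n ∈ {1,…,n}`. -/
def SeqOK (x : ℕ → ℕ) : Prop := ∀ n, 2 ≤ n → 1 ≤ x n ∧ x n ≤ n

/-- A pseudometric on the disjoint union `α ⊔ β` of two metric spaces is admissible
if it is symmetric, vanishes on the diagonal, satisfies the triangle inequality,
and restricts to the given metrics on `α` and on `β`. -/
def Admissible {α β : Type*} [MetricSpace α] [MetricSpace β]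
    (d : α ⊕ β → α ⊕ β → ℝ) : Prop :=
  (∀ a b, d a b = d b a) ∧ (∀ a, d a a = 0) ∧
  (∀ a b c, d a c ≤ d a b + d b c) ∧
  (∀ a b : α, d (Sum.inl a) (Sum.inl b) = dist a b) ∧
  (∀ a b : β, d (Sum.inr a) (Sum.inr b) = dist a b)

/-- `H_{d,R}(α,x;β,y) = max { sup_{u ∈ B_α(x,R)} d(u,β), sup_{v ∈ B_β(y,R)} d(v,α) }`,
for a pseudometric `d` on `α ⊔ β`. -/
noncomputable def HR {α β : Type*} [MetricSpace α] [MetricSpace β]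
    (d : α ⊕ β → α ⊕ β → ℝ) (x : α) (y : β) (R : ℝ) : ℝ :=
  max (⨆ u : Metric.ball x R, ⨅ v : β, d (Sum.inl (u : α)) (Sum.inr v))
      (⨆ v : Metric.ball y R, ⨅ u : α, d (Sum.inr (v : β)) (Sum.inl u))


section Helpers

open Real

lemma dist_pts {u1 u2 a b : ℝ} (h : u1 ≠ u2) :
    dist (⟨u1, a⟩ : TreePlane) ⟨u2, b⟩ = |a| + |u1 - u2| + |b| := by
  rw [TreePlane.dist_def]; simp [TreePlane.tdist, h]

lemma dist_same' {u1 a b : ℝ} :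
    dist (⟨u1, a⟩ : TreePlane) ⟨u1, b⟩ = |a - b| := by
  rw [TreePlane.dist_def]; simp [TreePlane.tdist]

lemma expSum_nonneg (n : ℕ) : 0 ≤ expSum n :=
  Finset.sum_nonneg fun i _ => (Real.exp_pos _).le

lemma expSum_mono {n m : ℕ} (h : n ≤ m) : expSum n ≤ expSum m :=
  Finset.sum_le_sum_of_subset_of_nonneg (Finset.Icc_subset_Icc_right h)
    (fun i _ _ => (Real.exp_pos _).le)

lemma expSum_gap {n m : ℕ} (h1 : 1 ≤ n) (h2 : n < m) :
    expSum n + Real.exp (((n : ℝ) + 1) ^ 2) ≤ expSum m := by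
  have hsplit : expSum n + ∑ i ∈ Finset.Ioc n m, Real.exp ((i : ℝ) ^ 2) = expSum m := by
    unfold expSum
    rw [show Finset.Icc 2 n = Finset.Ioc 1 n from (Finset.Icc_add_one_left_eq_Ioc 1 n).symm ▸ rfl,
      show Finset.Icc 2 m = Finset.Ioc 1 m from (Finset.Icc_add_one_left_eq_Ioc 1 m).symm ▸ rfl]
    exact Finset.sum_Ioc_consecutive _ h1 h2.le
  have hterm : Real.exp (((n + 1 : ℕ) : ℝ) ^ 2) ≤
      ∑ i ∈ Finset.Ioc n m, Real.exp ((i : ℝ) ^ 2) :=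
    Finset.single_le_sum (f := fun i : ℕ => Real.exp ((i : ℝ) ^ 2))
      (fun i _ => (Real.exp_pos _).le)
      (Finset.mem_Ioc.mpr ⟨Nat.lt_succ_self n, h2⟩)
  have hcast : (((n + 1 : ℕ) : ℝ)) = (n : ℝ) + 1 := by push_cast; ring
  rw [hcast] at hterm
  linarith

lemma exp_nat_eq {a b : ℕ} (ha : 1 ≤ a) (hb : 1 ≤ b)
    (h1 : Real.exp a - Real.exp b < 2) (h2 : Real.exp b - Real.exp a < 2) : a = b := by
  have key : ∀ c d : ℕ, 1 ≤ c → c < d → Real.exp c + 2 < Real.exp d := by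
    intro c d hc hcd
    have e1 : Real.exp ((c : ℝ) + 1) ≤ Real.exp d := by
      apply Real.exp_le_exp.mpr
      have : (c + 1 : ℕ) ≤ d := hcd
      exact_mod_cast this
    have e2 : Real.exp ((c : ℝ) + 1) = Real.exp c * Real.exp 1 := Real.exp_add _ _
    have e3 : Real.exp 1 ≤ Real.exp (c : ℝ) := Real.exp_le_exp.mpr (by exact_mod_cast hc)
    have e4 : (2.7182818283 : ℝ) < Real.exp 1 := Real.exp_one_gt_d9
    nlinarith
  rcases lt_trichotomy a b with h | h | h
  · exact absurd (key a b ha h) (by linarith)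
  · exact h
  · exact absurd (key b a hb h) (by linarith)

lemma exp_sq_big {k : ℝ} (hk : 2 ≤ k) :
    Real.exp k + Real.exp 2 + 2 < Real.exp ((k + 1) ^ 2) := by
  have h1 : k + 7 ≤ (k + 1) ^ 2 := by nlinarith
  have h2 : Real.exp (k + 7) ≤ Real.exp ((k + 1) ^ 2) := Real.exp_le_exp.mpr h1
  have h3 : Real.exp (k + 7) = Real.exp k * Real.exp 7 := Real.exp_add _ _
  have h4 : (8 : ℝ) ≤ Real.exp 7 := by nlinarith [Real.add_one_le_exp (7 : ℝ)]
  have h5 : (3 : ℝ) ≤ Real.exp 2 := by nlinarith [Real.add_one_le_exp (2 : ℝ)]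
  have h6 : Real.exp 2 ≤ Real.exp k := Real.exp_le_exp.mpr hk
  nlinarith

lemma dist_pm (y : ℕ → ℕ) (n : ℕ) : dist (Pm y n) (Pp y n) = 2 * Real.exp (y n) := by
  show dist (⟨expSum n, -Real.exp (y n)⟩ : TreePlane) ⟨expSum n, Real.exp (y n)⟩ = _
  rw [dist_same', show -Real.exp (y n) - Real.exp (y n) = -(2 * Real.exp (y n)) by ring,
    abs_neg, abs_of_pos (by positivity)]

lemma dist_to_base (y : ℕ → ℕ) {m : ℕ} (hm : 3 ≤ m) {p : TreePlane}
    (hp : p = Pp y m ∨ p = Pm y m) :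
    dist p (Pp y 2) = Real.exp (y m) + (expSum m - expSum 2) + Real.exp (y 2) := by
  have hlt : expSum 2 < expSum m :=
    lt_of_lt_of_le (lt_add_of_pos_right _ (Real.exp_pos _)) (expSum_gap (by norm_num) (by omega))
  have hne : expSum m ≠ expSum 2 := ne_of_gt hlt
  rcases hp with rfl | rfl
  · show dist (⟨expSum m, Real.exp (y m)⟩ : TreePlane) ⟨expSum 2, Real.exp (y 2)⟩ = _
    rw [dist_pts hne, abs_of_pos (Real.exp_pos _), abs_of_pos (Real.exp_pos _),
      abs_of_pos (sub_pos.mpr hlt)]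
  · show dist (⟨expSum m, -Real.exp (y m)⟩ : TreePlane) ⟨expSum 2, Real.exp (y 2)⟩ = _
    rw [dist_pts hne, abs_neg, abs_of_pos (Real.exp_pos _), abs_of_pos (Real.exp_pos _),
      abs_of_pos (sub_pos.mpr hlt)]

lemma mem_Mset (x : ℕ → ℕ) {n : ℕ} (hn : 2 ≤ n) {p : TreePlane}
    (hp : p = Pp x n ∨ p = Pm x n) : p ∈ Mset x := by
  refine Set.mem_iUnion₂.mpr ⟨n, hn, ?_⟩
  rcases hp with rfl | rfl
  · exact Or.inl rfl
  · exact Or.inr rfl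

lemma mem_Mset_elim {y : ℕ → ℕ} {q : TreePlane} (hq : q ∈ Mset y) :
    ∃ m, 2 ≤ m ∧ (q = Pp y m ∨ q = Pm y m) := by
  obtain ⟨m, hm, hmem⟩ := Set.mem_iUnion₂.mp hq
  exact ⟨m, hm, by simpa using hmem⟩

end Helpers

/-- If `(M_x, P⁺_{x,2})` and `(M_y, P⁺_{y,2})` admit an admissible pseudometric `d'`
on `M_x ⊔ M_y` with `d'(P⁺_{x,2}, P⁺_{y,2}) < r` and
`H_{d',R}(M_x, P⁺_{x,2}; M_y, P⁺_{y,2}) < r`, with `R` and `r` as stated, then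
`x_n = y_n` for `2 ≤ n ≤ n₀`. -/
theorem eq_up_to_n0_of_close (x y : ℕ → ℕ) (hx : SeqOK x) (hy : SeqOK y)
    (n₀ : ℕ) (hn₀ : 2 ≤ n₀) (R r : ℝ)
    (hR1 : Real.exp 2 + (∑ i ∈ Finset.Icc 2 n₀, Real.exp ((i : ℝ) ^ 2)) +
      Real.exp (n₀ : ℝ) < R)
    (hR2 : R < Real.exp 2 + ∑ i ∈ Finset.Icc 2 (n₀ + 1), Real.exp ((i : ℝ) ^ 2))
    (hr0 : 0 < r) (hr1 : r < 1)
    (hrn : ∀ n : ℕ, 2 ≤ n → n ≤ n₀ → Real.exp (n : ℝ) + r < Real.exp (((n : ℝ) + 1) ^ 2))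
    (d' : ↥(Mset x) ⊕ ↥(Mset y) → ↥(Mset x) ⊕ ↥(Mset y) → ℝ)
    (hadm : Admissible d')
    (hd1 : d' (Sum.inl ⟨Pp x 2, Pp_mem x⟩) (Sum.inr ⟨Pp y 2, Pp_mem y⟩) < r)
    (hd2 : HR d' ⟨Pp x 2, Pp_mem x⟩ ⟨Pp y 2, Pp_mem y⟩ R < r) :
    ∀ n, 2 ≤ n → n ≤ n₀ → x n = y n := by
  obtain ⟨hsym, hself, htri, hMM, hNN⟩ := hadm
  have hd'nn : ∀ a b, 0 ≤ d' a b := fun a b => by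
    have h1 := htri a b a
    rw [hself a, hsym b a] at h1
    linarith
  have hnex : Nonempty ↥(Mset y) := ⟨⟨Pp y 2, Pp_mem y⟩⟩
  have hR1' : Real.exp 2 + expSum n₀ + Real.exp (n₀ : ℝ) < R := hR1
  -- extraction of a close point in M_y for each point of M_x in the ball
  have key : ∀ (p : TreePlane) (hp : p ∈ Mset x), dist p (Pp x 2) < R →
      ∃ (q : TreePlane) (hq : q ∈ Mset y),
        d' (Sum.inl ⟨p, hp⟩) (Sum.inr ⟨q, hq⟩) < r := by
    intro p hp hpR
    have hA : (⨆ u : Metric.ball (⟨Pp x 2, Pp_mem x⟩ : ↥(Mset x)) R,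
        ⨅ v : ↥(Mset y), d' (Sum.inl (u : ↥(Mset x))) (Sum.inr v)) < r :=
      lt_of_le_of_lt (le_max_left _ _) hd2
    have hmem : (⟨p, hp⟩ : ↥(Mset x)) ∈ Metric.ball (⟨Pp x 2, Pp_mem x⟩ : ↥(Mset x)) R := by
      rw [Metric.mem_ball, Subtype.dist_eq]; exact hpR
    have hbdd : BddAbove (Set.range fun u : Metric.ball (⟨Pp x 2, Pp_mem x⟩ : ↥(Mset x)) R =>
        ⨅ v : ↥(Mset y), d' (Sum.inl (u : ↥(Mset x))) (Sum.inr v)) := by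
      refine ⟨R + r, ?_⟩
      rintro _ ⟨u, rfl⟩
      have h1 : (⨅ v : ↥(Mset y), d' (Sum.inl (u : ↥(Mset x))) (Sum.inr v)) ≤
          d' (Sum.inl (u : ↥(Mset x))) (Sum.inr ⟨Pp y 2, Pp_mem y⟩) :=
        ciInf_le ⟨0, by rintro _ ⟨v, rfl⟩; exact hd'nn _ _⟩ _
      have h2 := htri (Sum.inl (u : ↥(Mset x))) (Sum.inl ⟨Pp x 2, Pp_mem x⟩)
        (Sum.inr ⟨Pp y 2, Pp_mem y⟩)
      rw [hMM] at h2
      have h3 : dist (u : ↥(Mset x)) (⟨Pp x 2, Pp_mem x⟩ : ↥(Mset x)) < R :=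
        Metric.mem_ball.mp u.2
      linarith
    have hlt : (⨅ v : ↥(Mset y), d' (Sum.inl ((⟨p, hp⟩ : ↥(Mset x)))) (Sum.inr v)) < r :=
      lt_of_le_of_lt (le_ciSup hbdd
        (⟨⟨p, hp⟩, hmem⟩ : Metric.ball (⟨Pp x 2, Pp_mem x⟩ : ↥(Mset x)) R)) hA
    obtain ⟨v, hv⟩ := exists_lt_of_ciInf_lt hlt
    exact ⟨v.1, v.2, hv⟩
  -- comparison of distances through d'
  have comp : ∀ (p : TreePlane) (hp : p ∈ Mset x) (q : TreePlane) (hq : q ∈ Mset y),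
      d' (Sum.inl ⟨p, hp⟩) (Sum.inr ⟨q, hq⟩) < r →
      |dist q (Pp y 2) - dist p (Pp x 2)| < 2 := by
    intro p hp q hq hpq
    set P : ↥(Mset x) := ⟨p, hp⟩
    set Q : ↥(Mset y) := ⟨q, hq⟩
    set X2 : ↥(Mset x) := (⟨Pp x 2, Pp_mem x⟩ : ↥(Mset x))
    set Y2 : ↥(Mset y) := (⟨Pp y 2, Pp_mem y⟩ : ↥(Mset y))
    have e1 : d' (Sum.inr Q) (Sum.inr Y2) = dist q (Pp y 2) := by
      rw [hNN, Subtype.dist_eq]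
    have e2 : d' (Sum.inl P) (Sum.inl X2) = dist p (Pp x 2) := by
      rw [hMM, Subtype.dist_eq]
    have t1 := htri (Sum.inr Q) (Sum.inl P) (Sum.inl X2)
    have t1' := htri (Sum.inr Q) (Sum.inl X2) (Sum.inr Y2)
    have t1'' := htri (Sum.inr Q) (Sum.inl P) (Sum.inl X2)
    have ts : d' (Sum.inr Q) (Sum.inr Y2) ≤
        d' (Sum.inr Q) (Sum.inl P) + d' (Sum.inl P) (Sum.inl X2) + d' (Sum.inl X2) (Sum.inr Y2) := by
      have := htri (Sum.inr Q) (Sum.inl X2) (Sum.inr Y2)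
      linarith
    have ts2 : d' (Sum.inl P) (Sum.inl X2) ≤
        d' (Sum.inl P) (Sum.inr Q) + d' (Sum.inr Q) (Sum.inr Y2) + d' (Sum.inr Y2) (Sum.inl X2) := by
      have a1 := htri (Sum.inl P) (Sum.inr Y2) (Sum.inl X2)
      have a2 := htri (Sum.inl P) (Sum.inr Q) (Sum.inr Y2)
      linarith
    have hs1 : d' (Sum.inr Q) (Sum.inl P) = d' (Sum.inl P) (Sum.inr Q) := hsym _ _
    have hs2 : d' (Sum.inr Y2) (Sum.inl X2) = d' (Sum.inl X2) (Sum.inr Y2) := hsym _ _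
    have hd1' : d' (Sum.inl X2) (Sum.inr Y2) < r := hd1
    rw [abs_lt]
    constructor <;> [skip; skip] <;> rw [← e1, ← e2] <;> linarith
  -- bounds for exponentials of the sequences
  have hEx2 : Real.exp ((x 2 : ℕ) : ℝ) ≤ Real.exp 2 :=
    Real.exp_le_exp.mpr (by exact_mod_cast (hx 2 le_rfl).2)
  have hEy2 : Real.exp ((y 2 : ℕ) : ℝ) ≤ Real.exp 2 :=
    Real.exp_le_exp.mpr (by exact_mod_cast (hy 2 le_rfl).2)
  have hE1x2 : Real.exp 1 ≤ Real.exp ((x 2 : ℕ) : ℝ) :=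
    Real.exp_le_exp.mpr (by exact_mod_cast (hx 2 le_rfl).1)
  have he1 : (2 : ℝ) < Real.exp 1 := by nlinarith [Real.exp_one_gt_d9]
  have he2 : (3 : ℝ) ≤ Real.exp 2 := by nlinarith [Real.add_one_le_exp (2 : ℝ)]
  -- points of M_x up to n₀ are in the ball of radius R
  have hball : ∀ n : ℕ, 2 ≤ n → n ≤ n₀ → ∀ p : TreePlane,
      (p = Pp x n ∨ p = Pm x n) → dist p (Pp x 2) < R := by
    intro n h2n hn0 p hp
    have hexn : Real.exp ((x n : ℕ) : ℝ) ≤ Real.exp ((n₀ : ℕ) : ℝ) :=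
      Real.exp_le_exp.mpr (by exact_mod_cast le_trans (hx n h2n).2 hn0)
    have hsum : expSum n ≤ expSum n₀ := expSum_mono hn0
    have hS2 : (0:ℝ) ≤ expSum 2 := expSum_nonneg 2
    have hSn : (0:ℝ) ≤ expSum n₀ := expSum_nonneg n₀
    have hen0 : Real.exp 2 ≤ Real.exp ((n₀ : ℕ) : ℝ) :=
      Real.exp_le_exp.mpr (by exact_mod_cast hn₀)
    rcases eq_or_lt_of_le h2n with h2 | h3
    · rcases hp with rfl | rfl
      · rw [← h2, dist_self]
        linarith [Real.exp_pos (2:ℝ), Real.exp_pos ((n₀ : ℕ) : ℝ)]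
      · rw [← h2, dist_pm]
        linarith
    · rw [dist_to_base x h3 hp]
      have : Real.exp ((x n : ℕ) : ℝ) + (expSum n - expSum 2) + Real.exp ((x 2 : ℕ) : ℝ) ≤
          Real.exp ((n₀ : ℕ) : ℝ) + expSum n₀ + Real.exp 2 := by linarith
      linarith
  -- first: x 2 = y 2
  have hx2 : x 2 = y 2 := by
    have hpm : Pm x 2 ∈ Mset x := mem_Mset x le_rfl (Or.inr rfl)
    obtain ⟨q, hq, hdq⟩ := key (Pm x 2) hpm (hball 2 le_rfl hn₀ _ (Or.inr rfl))
    have hcmp := comp _ hpm _ hq hdq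
    rw [dist_pm, abs_lt] at hcmp
    obtain ⟨m, hm2, hqm⟩ := mem_Mset_elim hq
    rcases eq_or_lt_of_le hm2 with hm | hm3
    · subst hm
      rcases hqm with rfl | rfl
      · rw [dist_self] at hcmp
        linarith [hcmp.1]
      · rw [dist_pm] at hcmp
        exact exp_nat_eq (hx 2 le_rfl).1 (hy 2 le_rfl).1 (by linarith [hcmp.2]) (by linarith [hcmp.1])
    · exfalso
      rw [dist_to_base y hm3 hqm] at hcmp
      have hgap : expSum 2 + Real.exp ((((2:ℕ) : ℝ) + 1) ^ 2) ≤ expSum m :=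
        expSum_gap (by norm_num) (by omega)
      have hbig := exp_sq_big (k := ((2:ℕ) : ℝ)) (by norm_num)
      have hq2 : (0:ℝ) < Real.exp ((y m : ℕ) : ℝ) := Real.exp_pos _
      have hq3 : (0:ℝ) < Real.exp ((y 2 : ℕ) : ℝ) := Real.exp_pos _
      push_cast at hgap hbig
      linarith [hcmp.1]
  -- now the general case
  intro n h2n hn0
  rcases eq_or_lt_of_le h2n with h2 | h3
  · rw [← h2]; exact hx2
  · have hpp : Pp x n ∈ Mset x := mem_Mset x h2n (Or.inl rfl)
    obtain ⟨q, hq, hdq⟩ := key (Pp x n) hpp (hball n h2n hn0 _ (Or.inl rfl))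
    have hcmp := comp _ hpp _ hq hdq
    rw [dist_to_base x h3 (Or.inl rfl), abs_lt] at hcmp
    obtain ⟨m, hm2, hqm⟩ := mem_Mset_elim hq
    have hExn : Real.exp ((x n : ℕ) : ℝ) ≤ Real.exp ((n : ℕ) : ℝ) :=
      Real.exp_le_exp.mpr (by exact_mod_cast (hx n h2n).2)
    rcases lt_trichotomy m n with hmn | rfl | hmn
    · exfalso
      rcases eq_or_lt_of_le hm2 with hm | hm3
      · -- m = 2 : q is one of the two base points of M_y
        subst hm
        have hgap : expSum 2 + Real.exp ((((2:ℕ) : ℝ) + 1) ^ 2) ≤ expSum n :=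
          expSum_gap (by norm_num) (by omega)
        have hbig := exp_sq_big (k := ((2:ℕ) : ℝ)) (by norm_num)
        have hqle : dist q (Pp y 2) ≤ 2 * Real.exp ((y 2 : ℕ) : ℝ) := by
          rcases hqm with rfl | rfl
          · rw [dist_self]; positivity
          · rw [dist_pm]
        have hq3 : (0:ℝ) < Real.exp ((y 2 : ℕ) : ℝ) := Real.exp_pos _
        push_cast at hgap hbig
        linarith [hcmp.1, Real.exp_pos ((x n : ℕ) : ℝ), Real.exp_pos ((x 2 : ℕ) : ℝ)]
      · -- 3 ≤ m < n
        rw [dist_to_base y hm3 hqm] at hcmp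
        have hgap : expSum m + Real.exp ((((m : ℕ) : ℝ) + 1) ^ 2) ≤ expSum n :=
          expSum_gap (by omega) hmn
        have hbig := exp_sq_big (k := ((m : ℕ) : ℝ)) (by exact_mod_cast hm2)
        have hEym : Real.exp ((y m : ℕ) : ℝ) ≤ Real.exp ((m : ℕ) : ℝ) :=
          Real.exp_le_exp.mpr (by exact_mod_cast (hy m hm2).2)
        linarith [hcmp.1, Real.exp_pos ((x n : ℕ) : ℝ), Real.exp_pos ((x 2 : ℕ) : ℝ)]
    · -- m = n : conclude x n = y n
      rw [dist_to_base y h3 hqm] at hcmp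
      have hexy2 : Real.exp ((x 2 : ℕ) : ℝ) = Real.exp ((y 2 : ℕ) : ℝ) := by rw [hx2]
      exact exp_nat_eq (hx m h2n).1 (hy m h2n).1 (by linarith [hcmp.2]) (by linarith [hcmp.1])
    · -- n < m
      exfalso
      have hm3 : 3 ≤ m := by omega
      rw [dist_to_base y hm3 hqm] at hcmp
      have hgap : expSum n + Real.exp ((((n : ℕ) : ℝ) + 1) ^ 2) ≤ expSum m :=
        expSum_gap (by omega) hmn
      have hbig := exp_sq_big (k := ((n : ℕ) : ℝ)) (by exact_mod_cast h2n)
      linarith [hcmp.2, Real.exp_pos ((y m : ℕ) : ℝ), Real.exp_pos ((y 2 : ℕ) : ℝ)]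
end
end

section
/- Let (M, x) and (N, y) be pointed proper metric spaces. Suppose that for every R > 0 and every r > 0 there exists an admissible pseudometric d on M ⊔ N such that max{ d(x,y), H_{d,R}(M,x;N,y) } < r. Then there exists a bijective isometry φ : M → N with φ(x) = y. (This is the nontrivial inclusion in the identity ⋂_{R,r>0} U_{R,r} = Δ for the basic entourages of the Gromov space.) -/
noncomputable section

open Filter Metric Set Topology

lemma admissible_nonneg {α β : Type*} [MetricSpace α] [MetricSpace β]
    {d : α ⊕ β → α ⊕ β → ℝ} (hd : Admissible d) (a b : α ⊕ β) : 0 ≤ d a b := by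
  obtain ⟨hsymm, hzero, htri, -, -⟩ := hd
  have h1 := htri a b a
  have h2 := hzero a
  have h3 := hsymm a b
  linarith

/-- An isometric self-map of a compact set into itself is onto the set. -/
lemma surjOn_of_dist_preserving {α : Type*} [MetricSpace α] {s : Set α} (hs : IsCompact s)
    {g : α → α} (hg : ∀ a b, dist (g a) (g b) = dist a b) (hmap : Set.MapsTo g s s) :
    s ⊆ g '' s := by
  intro a ha
  by_contra hna
  have hgc : Continuous g := (Isometry.of_dist_eq hg).continuous
  have himg : IsCompact (g '' s) := hs.image hgc
  have hne : (g '' s).Nonempty := ⟨g a, ⟨a, ha, rfl⟩⟩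
  have hpos : 0 < infDist a (g '' s) :=
    (himg.isClosed.notMem_iff_infDist_pos hne).1 hna
  set ε := infDist a (g '' s) with hε
  have hiter : ∀ (k : ℕ) (p q : α), dist (g^[k] p) (g^[k] q) = dist p q := by
    intro k
    induction k with
    | zero => simp
    | succ k ih =>
      intro p q
      rw [Function.iterate_succ_apply', Function.iterate_succ_apply', hg, ih]
  have hmem : ∀ n : ℕ, g^[n] a ∈ s := fun n => hmap.iterate n ha
  have hsep : ∀ i j : ℕ, i < j → ε ≤ dist (g^[i] a) (g^[j] a) := by
    intro i j hij
    have h1 : g^[j] a = g^[i] (g^[j - i] a) := by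
      rw [← Function.iterate_add_apply]
      congr 1
      omega
    rw [h1, hiter]
    apply infDist_le_dist_of_mem
    obtain ⟨k, hk⟩ : ∃ k, j - i = k + 1 := ⟨j - i - 1, by omega⟩
    rw [hk, Function.iterate_succ_apply']
    exact ⟨g^[k] a, hmem k, rfl⟩
  obtain ⟨z, -, ψ, hψ, hconv⟩ := hs.tendsto_subseq hmem
  have hcauchy : CauchySeq (fun n => g^[ψ n] a) := hconv.cauchySeq
  obtain ⟨K, hK⟩ := Metric.cauchySeq_iff'.mp hcauchy ε hpos
  have h1 := hK (K + 1) (Nat.le_succ K)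
  have h2 := hsep (ψ K) (ψ (K + 1)) (hψ (Nat.lt_succ_self K))
  rw [dist_comm] at h2
  exact absurd h1 (not_lt.mpr h2)

/-- One-directional construction: a distance-preserving pointed map `M → N`. -/
lemma exists_pointed_dist_map (M N : Type*) [MetricSpace M] [MetricSpace N]
    [ProperSpace N] (x : M) (y : N)
    (h : ∀ R > (0 : ℝ), ∀ r > (0 : ℝ), ∃ d : M ⊕ N → M ⊕ N → ℝ, Admissible d ∧
      max (d (Sum.inl x) (Sum.inr y)) (HR d x y R) < r) :
    ∃ φ : M → N, (∀ a b, dist (φ a) (φ b) = dist a b) ∧ φ x = y := by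
  haveI : Nonempty N := ⟨y⟩
  have hpos : ∀ n : ℕ, (0 : ℝ) < (n : ℝ) + 1 := fun n => by positivity
  choose d hadm hlt using fun n : ℕ => h ((n : ℝ) + 1) (hpos n) (1 / ((n : ℝ) + 1))
    (by positivity)
  have dxy : ∀ n : ℕ, d n (Sum.inl x) (Sum.inr y) < 1 / ((n : ℝ) + 1) :=
    fun n => lt_of_le_of_lt (le_max_left _ _) (hlt n)
  have hHR : ∀ n : ℕ, HR (d n) x y ((n : ℝ) + 1) < 1 / ((n : ℝ) + 1) :=
    fun n => lt_of_le_of_lt (le_max_right _ _) (hlt n)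
  have key : ∀ (n : ℕ) (u : M), dist u x < (n : ℝ) + 1 →
      ∃ v : N, d n (Sum.inl u) (Sum.inr v) < 1 / ((n : ℝ) + 1) := by
    intro n u hu
    have hmem : u ∈ Metric.ball x ((n : ℝ) + 1) := by rwa [Metric.mem_ball]
    have hbdd : BddAbove (Set.range fun u' : Metric.ball x ((n : ℝ) + 1) =>
        ⨅ v : N, d n (Sum.inl (u' : M)) (Sum.inr v)) := by
      refine ⟨((n : ℝ) + 1) + d n (Sum.inl x) (Sum.inr y), ?_⟩
      rintro _ ⟨u', rfl⟩
      refine le_trans (ciInf_le ⟨0, ?_⟩ y) ?_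
      · rintro _ ⟨v, rfl⟩; exact admissible_nonneg (hadm n) _ _
      · have htri := (hadm n).2.2.1 (Sum.inl (u' : M)) (Sum.inl x) (Sum.inr y)
        have hM := (hadm n).2.2.2.1 (u' : M) x
        have hball : dist (u' : M) x < (n : ℝ) + 1 := Metric.mem_ball.mp u'.2
        linarith
    have hle : (⨅ v : N, d n (Sum.inl u) (Sum.inr v)) ≤ HR (d n) x y ((n : ℝ) + 1) :=
      le_trans (le_ciSup hbdd ⟨u, hmem⟩) (le_max_left _ _)
    exact exists_lt_of_ciInf_lt (lt_of_le_of_lt hle (hHR n))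
  have hx : ∀ n : ℕ, dist x x < (n : ℝ) + 1 := by
    intro n; rw [dist_self]; positivity
  let f : ℕ → M → N := fun n u =>
    if hu : dist u x < (n : ℝ) + 1 then (key n u hu).choose else y
  have hf : ∀ (n : ℕ) (u : M), dist u x < (n : ℝ) + 1 →
      d n (Sum.inl u) (Sum.inr (f n u)) < 1 / ((n : ℝ) + 1) := by
    intro n u hu
    simp only [f, dif_pos hu]
    exact (key n u hu).choose_spec
  -- distance comparison
  have hcmp : ∀ (n : ℕ) (u v : M), dist u x < (n : ℝ) + 1 → dist v x < (n : ℝ) + 1 →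
      |dist (f n u) (f n v) - dist u v| ≤ 2 / ((n : ℝ) + 1) := by
    intro n u v hu hv
    obtain ⟨hsymm, hzero, htri, hM, hN⟩ := hadm n
    have h1 := hf n u hu
    have h2 := hf n v hv
    have t1 := htri (Sum.inr (f n u)) (Sum.inl u) (Sum.inr (f n v))
    have t2 := htri (Sum.inl u) (Sum.inl v) (Sum.inr (f n v))
    have t3 := htri (Sum.inl u) (Sum.inr (f n u)) (Sum.inl v)
    have t4 := htri (Sum.inr (f n u)) (Sum.inr (f n v)) (Sum.inl v)
    have e1 := hN (f n u) (f n v)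
    have e2 := hM u v
    have s1 := hsymm (Sum.inr (f n u)) (Sum.inl u)
    have s2 := hsymm (Sum.inr (f n v)) (Sum.inl v)
    have hsum : (2 : ℝ) / ((n : ℝ) + 1) = 1 / ((n : ℝ) + 1) + 1 / ((n : ℝ) + 1) := by
      ring
    rw [abs_le]
    constructor <;> linarith
  -- pointwise boundedness
  have hbd : ∀ (n : ℕ) (u : M), dist (f n u) y ≤ dist u x + 2 := by
    intro n u
    by_cases hu : dist u x < (n : ℝ) + 1
    · obtain ⟨hsymm, hzero, htri, hM, hN⟩ := hadm n
      have h1 := hf n u hu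
      have h2 := dxy n
      have t1 := htri (Sum.inr (f n u)) (Sum.inl u) (Sum.inr y)
      have t2 := htri (Sum.inl u) (Sum.inl x) (Sum.inr y)
      have e1 := hN (f n u) y
      have e2 := hM u x
      have s1 := hsymm (Sum.inr (f n u)) (Sum.inl u)
      have hr : 1 / ((n : ℝ) + 1) ≤ 1 := by
        rw [div_le_one (hpos n)]
        have : (0:ℝ) ≤ (n:ℝ) := Nat.cast_nonneg n
        linarith
      linarith
    · simp only [f, dif_neg hu, dist_self]
      positivity
  have htendzero : Tendsto (fun n : ℕ => 2 / ((n : ℝ) + 1)) atTop (𝓝 0) := by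
    have := (tendsto_one_div_add_atTop_nhds_zero_nat (𝕜 := ℝ)).const_mul 2
    simpa [mul_one_div, div_eq_mul_inv] using this
  -- f n x tends to y
  have hfx : Tendsto (fun n => f n x) atTop (𝓝 y) := by
    rw [tendsto_iff_dist_tendsto_zero]
    refine squeeze_zero (fun n => dist_nonneg) (fun n => ?_) htendzero
    obtain ⟨hsymm, hzero, htri, hM, hN⟩ := hadm n
    have h1 := hf n x (hx n)
    have h2 := dxy n
    have t1 := htri (Sum.inr (f n x)) (Sum.inl x) (Sum.inr y)
    have e1 := hN (f n x) y
    have s1 := hsymm (Sum.inr (f n x)) (Sum.inl x)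
    have hsum : (2 : ℝ) / ((n : ℝ) + 1) = 1 / ((n : ℝ) + 1) + 1 / ((n : ℝ) + 1) := by
      ring
    linarith
  -- ultrafilter limit
  let F : Ultrafilter ℕ := Ultrafilter.of atTop
  have hF : (F : Filter ℕ) ≤ atTop := Ultrafilter.of_le _
  have hlim : ∀ u : M, ∃ z : N, Tendsto (fun n => f n u) (F : Filter ℕ) (𝓝 z) := by
    intro u
    have hK : IsCompact (Metric.closedBall y (dist u x + 2)) := isCompact_closedBall _ _
    have hmem : (Ultrafilter.map (fun n => f n u) F : Filter N) ≤
        𝓟 (Metric.closedBall y (dist u x + 2)) := by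
      rw [Ultrafilter.coe_map, le_principal_iff, mem_map]
      exact univ_mem' fun n => Metric.mem_closedBall.mpr (hbd n u)
    obtain ⟨z, -, hz⟩ := hK.ultrafilter_le_nhds (Ultrafilter.map (fun n => f n u) F) hmem
    exact ⟨z, hz⟩
  choose φ hφ using hlim
  refine ⟨φ, ?_, ?_⟩
  · intro u v
    have h1 : Tendsto (fun n => dist (f n u) (f n v)) (F : Filter ℕ)
        (𝓝 (dist (φ u) (φ v))) := (hφ u).dist (hφ v)
    have h2 : Tendsto (fun n => dist (f n u) (f n v)) atTop (𝓝 (dist u v)) := by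
      have hsq : Tendsto (fun n : ℕ => dist (f n u) (f n v) - dist u v) atTop (𝓝 0) := by
        refine squeeze_zero_norm' ?_ htendzero
        filter_upwards [eventually_ge_atTop (Nat.ceil (max (dist u x) (dist v x)))]
          with n hn
        have hcast : (Nat.ceil (max (dist u x) (dist v x)) : ℝ) ≤ (n : ℝ) :=
          Nat.cast_le.mpr hn
        have hceil : max (dist u x) (dist v x) ≤
            (Nat.ceil (max (dist u x) (dist v x)) : ℝ) := Nat.le_ceil _
        have hu : dist u x < (n : ℝ) + 1 := by
          have := le_max_left (dist u x) (dist v x)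
          linarith
        have hv : dist v x < (n : ℝ) + 1 := by
          have := le_max_right (dist u x) (dist v x)
          linarith
        simpa [Real.norm_eq_abs] using hcmp n u v hu hv
      have := hsq.add_const (dist u v)
      simpa using this
    exact tendsto_nhds_unique (h1) (h2.mono_left hF)
  · exact tendsto_nhds_unique (hφ x) (hfx.mono_left hF)

/-- The nontrivial inclusion in `⋂_{R,r>0} U_{R,r} = Δ`: if for all `R, r > 0` the
pointed proper metric spaces `(M,x)` and `(N,y)` admit an admissible pseudometric `d`
on `M ⊔ N` with `max{d(x,y), H_{d,R}(M,x;N,y)} < r`, then there is a pointed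
bijective isometry `(M,x) → (N,y)`. -/
theorem pointed_isometric_of_close (M N : Type*) [MetricSpace M] [MetricSpace N]
    [ProperSpace M] [ProperSpace N] (x : M) (y : N)
    (h : ∀ R > (0 : ℝ), ∀ r > (0 : ℝ), ∃ d : M ⊕ N → M ⊕ N → ℝ, Admissible d ∧
      max (d (Sum.inl x) (Sum.inr y)) (HR d x y R) < r) :
    ∃ φ : M → N, Function.Bijective φ ∧ (∀ a b, dist (φ a) (φ b) = dist a b) ∧ φ x = y := by
  -- symmetric hypothesis
  have h' : ∀ R > (0 : ℝ), ∀ r > (0 : ℝ), ∃ d : N ⊕ M → N ⊕ M → ℝ, Admissible d ∧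
      max (d (Sum.inl y) (Sum.inr x)) (HR d y x R) < r := by
    intro R hR r hr
    obtain ⟨d, hd, hlt⟩ := h R hR r hr
    obtain ⟨hsymm, hzero, htri, hM, hN⟩ := hd
    refine ⟨fun a b => d a.swap b.swap, ⟨fun a b => hsymm _ _, fun a => hzero _,
      fun a b c => htri _ _ _, fun a b => hN a b, fun a b => hM a b⟩, ?_⟩
    rw [max_lt_iff] at hlt ⊢
    obtain ⟨hlt1, hlt2⟩ := hlt
    rw [HR, max_lt_iff] at hlt2
    constructor
    · simpa [Sum.swap, hsymm (Sum.inr y) (Sum.inl x)] using hlt1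
    · rw [HR, max_lt_iff]
      constructor
      · simpa [Sum.swap] using hlt2.2
      · simpa [Sum.swap] using hlt2.1
  obtain ⟨φ, hφ, hφx⟩ := exists_pointed_dist_map M N x y h
  obtain ⟨ψ, hψ, hψy⟩ := exists_pointed_dist_map N M y x h'
  refine ⟨φ, ⟨fun a b hab => ?_, fun z => ?_⟩, hφ, hφx⟩
  · have : dist a b = 0 := by rw [← hφ a b, hab, dist_self]
    exact dist_eq_zero.mp this
  · -- surjectivity via compact balls
    set g : N → N := fun w => φ (ψ w) with hg
    have hgd : ∀ a b : N, dist (g a) (g b) = dist a b := by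
      intro a b; rw [hg]; simp only; rw [hφ, hψ]
    have hgy : g y = y := by rw [hg]; simp only [hψy, hφx]
    have hmap : Set.MapsTo g (Metric.closedBall y (dist z y)) (Metric.closedBall y (dist z y)) := by
      intro w hw
      rw [Metric.mem_closedBall] at hw ⊢
      calc dist (g w) y = dist (g w) (g y) := by rw [hgy]
        _ = dist w y := hgd w y
        _ ≤ dist z y := hw
    have hz : z ∈ Metric.closedBall y (dist z y) := Metric.mem_closedBall.mpr le_rfl
    obtain ⟨w, -, hw⟩ := surjOn_of_dist_preserving (isCompact_closedBall y (dist z y))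
      hgd hmap hz
    exact ⟨ψ w, hw⟩
end
end
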